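/- Let 𝔤 be a finite-dimensional real 2-step nilpotent Lie algebra, let Δ, Δ' ⊆ 𝔤 be subspaces with 𝔤 = Δ ⊕ [𝔤,𝔤] and 𝔤 = Δ' ⊕ [𝔤,𝔤], equipped with inner products ρ and ρ' respectively, and let π : 𝔤 → 𝔤/[𝔤,𝔤] be the quotient map. Assume the abelianization norms coincide, i.e. for all x ∈ Δ and x' ∈ Δ' with π(x) = π(x') one has ρ(x,x) = ρ'(x',x'). Then there exists a Lie algebra automorphism f of 𝔤 such that: (i) π∘f = π, i.e. f(x) − x ∈ [𝔤,𝔤] for all x, and hence there is a linear map L : 𝔤/[𝔤,𝔤] → [𝔤,𝔤] with f(x) = x + L(π(x)) for all x; (ii) f(Δ) = Δ' and ρ'(f(x),f(y)) = ρ(x,y) for all x, y ∈ Δ; (iii) f is an isometry from (𝔤,d) to (𝔤,d'), i.e. d'(f(p),f(q)) = d(p,q) for all p, q ∈ 𝔤, where d and d' are the sub-Riemannian distances associated with (Δ,ρ) and (Δ',ρ'). -/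

import Mathlib

open MeasureTheory

/-- The endpoint of the horizontal curve with control `u` in the 2-step model group `(𝔤,∗)`:
`E(u) = ∫₀¹ u + (1/2)∫₀¹ ⁅∫₀ᵗ u, u(t)⁆ dt`. -/
noncomputable def endpointMap {L : Type*} [NormedAddCommGroup L] [NormedSpace ℝ L]
    (bracket : L →ₗ[ℝ] L →ₗ[ℝ] L) (u : ℝ → L) : L :=
  (∫ t in (0:ℝ)..1, u t) +
    (2⁻¹ : ℝ) • ∫ t in (0:ℝ)..1, bracket (∫ s in (0:ℝ)..t, u s) (u t)

/-- `Δ` is bracket-generating: every subspace containing `Δ` and closed under the bracket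
(i.e. every Lie subalgebra containing `Δ`) is all of `𝔤`; equivalently, the smallest Lie
subalgebra containing `Δ` equals `𝔤`. -/
def BracketGenerating {L : Type*} [NormedAddCommGroup L] [NormedSpace ℝ L]
    (bracket : L →ₗ[ℝ] L →ₗ[ℝ] L) (Δ : Submodule ℝ L) : Prop :=
  ∀ W : Submodule ℝ L, Δ ≤ W → (∀ x ∈ W, ∀ y ∈ W, bracket x y ∈ W) → W = ⊤

/-- The derived subalgebra `[𝔤,𝔤]`, spanned by all brackets. -/
def derivedSub {L : Type*} [NormedAddCommGroup L] [NormedSpace ℝ L]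
    (bracket : L →ₗ[ℝ] L →ₗ[ℝ] L) : Submodule ℝ L :=
  Submodule.span ℝ {z : L | ∃ x y : L, z = bracket x y}

/-- The group product `x∗y = x + y + (1/2)⁅x,y⁆` of the model group. -/
noncomputable def gmul {L : Type*} [NormedAddCommGroup L] [NormedSpace ℝ L]
    (bracket : L →ₗ[ℝ] L →ₗ[ℝ] L) (x y : L) : L :=
  x + y + (2⁻¹ : ℝ) • bracket x y

/-- `N(q)`: the infimal energy `∫₀¹ ρ(u,u)` over `L²` controls `u` valued in `S`
with endpoint `q`. -/
noncomputable def energyN {L : Type*} [NormedAddCommGroup L] [NormedSpace ℝ L]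
    (bracket : L →ₗ[ℝ] L →ₗ[ℝ] L) (S : Set L) (ρ : L →ₗ[ℝ] L →ₗ[ℝ] ℝ) (q : L) : ℝ :=
  sInf {e : ℝ | ∃ u : ℝ → L,
    MemLp u 2 (volume.restrict (Set.Icc (0:ℝ) 1)) ∧
    (∀ᵐ t ∂(volume.restrict (Set.Icc (0:ℝ) 1)), u t ∈ S) ∧
    endpointMap bracket u = q ∧ e = ∫ t in (0:ℝ)..1, ρ (u t) (u t)}

/-- The sub-Riemannian distance `d(p,q) = √(N((−p)∗q))` of controls valued in `S`. -/
noncomputable def sdist {L : Type*} [NormedAddCommGroup L] [NormedSpace ℝ L]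
    (bracket : L →ₗ[ℝ] L →ₗ[ℝ] L) (S : Set L) (ρ : L →ₗ[ℝ] L →ₗ[ℝ] ℝ) (p q : L) : ℝ :=
  Real.sqrt (energyN bracket S ρ (gmul bracket (-p) q))

/-- `V = {v ∈ Δ : ρ(v,w) = 0 for all w ∈ Δ ∩ [𝔤,𝔤]}`, the horizontal space of the
canonical asymptotic metric. -/
def Vset {L : Type*} [NormedAddCommGroup L] [NormedSpace ℝ L]
    (bracket : L →ₗ[ℝ] L →ₗ[ℝ] L) (Δ : Submodule ℝ L) (ρ : L →ₗ[ℝ] L →ₗ[ℝ] ℝ) : Set L :=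
  {v : L | v ∈ Δ ∧ ∀ w ∈ Δ ⊓ derivedSub bracket, ρ v w = 0}


section aux
variable {L : Type*} [NormedAddCommGroup L] [NormedSpace ℝ L]

lemma skew (bracket : L →ₗ[ℝ] L →ₗ[ℝ] L) (halt : ∀ x : L, bracket x x = 0) (x y : L) :
    bracket x y = - bracket y x := by
  have h := halt (x + y)
  simp only [map_add, LinearMap.add_apply, halt, zero_add, add_zero] at h
  exact eq_neg_of_add_eq_zero_right h

lemma bracket_left_zero (bracket : L →ₗ[ℝ] L →ₗ[ℝ] L)
    (h2step : ∀ x y z : L, bracket (bracket x y) z = 0)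
    {w : L} (hw : w ∈ derivedSub bracket) (z : L) : bracket w z = 0 := by
  induction hw using Submodule.span_induction with
  | mem x h => obtain ⟨a, b, rfl⟩ := h; exact h2step a b z
  | zero => simp
  | add x y hx hy px py => simp [px, py]
  | smul a x hx px => simp [px]

lemma bracket_right_zero (bracket : L →ₗ[ℝ] L →ₗ[ℝ] L)
    (halt : ∀ x : L, bracket x x = 0)
    (h2step : ∀ x y z : L, bracket (bracket x y) z = 0)
    (z : L) {w : L} (hw : w ∈ derivedSub bracket) : bracket z w = 0 := by
  rw [skew bracket halt, bracket_left_zero bracket h2step hw, neg_zero]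

lemma cle_intervalIntegral (g : L ≃L[ℝ] L) (u : ℝ → L) (a b : ℝ) :
    (∫ t in a..b, g (u t)) = g (∫ t in a..b, u t) := by
  rw [intervalIntegral.intervalIntegral_eq_integral_uIoc,
    intervalIntegral.intervalIntegral_eq_integral_uIoc, g.integral_comp_comm,
    ← _root_.map_smul]

lemma energySet_subset [FiniteDimensional ℝ L] (bracket : L →ₗ[ℝ] L →ₗ[ℝ] L)
    (g : L ≃ₗ[ℝ] L) (hg : ∀ x y : L, g (bracket x y) = bracket (g x) (g y))
    (S S' : Set L) (hS : ∀ x ∈ S, g x ∈ S')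
    (ρ ρ' : L →ₗ[ℝ] L →ₗ[ℝ] ℝ) (hρ : ∀ x ∈ S, ρ' (g x) (g x) = ρ x x) (z : L) :
    {e : ℝ | ∃ u : ℝ → L,
      MemLp u 2 (volume.restrict (Set.Icc (0:ℝ) 1)) ∧
      (∀ᵐ t ∂(volume.restrict (Set.Icc (0:ℝ) 1)), u t ∈ S) ∧
      endpointMap bracket u = z ∧ e = ∫ t in (0:ℝ)..1, ρ (u t) (u t)} ⊆
    {e : ℝ | ∃ u : ℝ → L,
      MemLp u 2 (volume.restrict (Set.Icc (0:ℝ) 1)) ∧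
      (∀ᵐ t ∂(volume.restrict (Set.Icc (0:ℝ) 1)), u t ∈ S') ∧
      endpointMap bracket u = g z ∧ e = ∫ t in (0:ℝ)..1, ρ' (u t) (u t)} := by
  rintro e ⟨u, hu2, huS, hend, he⟩
  set G := g.toContinuousLinearEquiv with hG
  have hGg : ∀ x : L, G x = g x := fun x => rfl
  have hint : ∀ (a b : ℝ) (v : ℝ → L),
      (∫ t in a..b, g (v t)) = g (∫ t in a..b, v t) := by
    intro a b v
    simpa only [hGg] using cle_intervalIntegral G v a b
  refine ⟨fun t => g (u t), ?_, ?_, ?_, ?_⟩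
  · exact ((G : L →L[ℝ] L).comp_memLp' hu2 : _)
  · filter_upwards [huS] with t ht using hS _ ht
  · rw [← hend]
    unfold endpointMap
    have h2 : (∫ t in (0:ℝ)..1, bracket (∫ s in (0:ℝ)..t, g (u s)) (g (u t)))
        = g (∫ t in (0:ℝ)..1, bracket (∫ s in (0:ℝ)..t, u s) (u t)) := by
      rw [← hint]
      congr 1
      funext t
      rw [hint 0 t u, ← hg]
    rw [h2, hint 0 1 u, ← _root_.map_smul, ← map_add]
  · rw [he]
    refine (intervalIntegral.integral_congr_ae ?_).symm
    have := (ae_restrict_iff' measurableSet_Icc).1 huS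
    filter_upwards [this] with t ht hmem
    have htIcc : t ∈ Set.Icc (0:ℝ) 1 := by
      rw [Set.uIoc_of_le (by norm_num : (0:ℝ) ≤ 1)] at hmem
      exact Set.Ioc_subset_Icc_self hmem
    exact hρ _ (ht htIcc)

end aux

/-- if `𝔤 = Δ ⊕ [𝔤,𝔤] = Δ' ⊕ [𝔤,𝔤]` and the abelianization norms of
`(Δ,ρ)` and `(Δ',ρ')` coincide, then there is a Lie algebra automorphism `f` with
`π∘f = π` (so `f(x) = x + T(π(x))` for a linear `T` into `[𝔤,𝔤]` vanishing on `[𝔤,𝔤]`),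
mapping `(Δ,ρ)` isometrically onto `(Δ',ρ')`, and which is an isometry
`(𝔤,d) → (𝔤,d')`. -/
theorem stmt_11 {L : Type*} [NormedAddCommGroup L] [NormedSpace ℝ L] [FiniteDimensional ℝ L]
    (bracket : L →ₗ[ℝ] L →ₗ[ℝ] L)
    (halt : ∀ x : L, bracket x x = 0)
    (h2step : ∀ x y z : L, bracket (bracket x y) z = 0)
    (Δ Δ' : Submodule ℝ L)
    (hcompl : IsCompl Δ (derivedSub bracket))
    (hcompl' : IsCompl Δ' (derivedSub bracket))
    (ρ ρ' : L →ₗ[ℝ] L →ₗ[ℝ] ℝ)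
    (hsym : ∀ x ∈ Δ, ∀ y ∈ Δ, ρ x y = ρ y x)
    (hpos : ∀ x ∈ Δ, x ≠ 0 → 0 < ρ x x)
    (hsym' : ∀ x ∈ Δ', ∀ y ∈ Δ', ρ' x y = ρ' y x)
    (hpos' : ∀ x ∈ Δ', x ≠ 0 → 0 < ρ' x x)
    -- the abelianization norms coincide: if `x ∈ Δ` and `x' ∈ Δ'` have the same image in
    -- `𝔤/[𝔤,𝔤]` (i.e. `x - x' ∈ [𝔤,𝔤]`), then `ρ(x,x) = ρ'(x',x')`
    (hab : ∀ x ∈ Δ, ∀ x' ∈ Δ', x - x' ∈ derivedSub bracket → ρ x x = ρ' x' x') :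
    ∃ f : L ≃ₗ[ℝ] L,
      -- `f` is a Lie algebra automorphism
      (∀ x y : L, f (bracket x y) = bracket (f x) (f y)) ∧
      -- (i) `π ∘ f = π`
      (∀ x : L, f x - x ∈ derivedSub bracket) ∧
      -- ... hence `f(x) = x + T(x)` for a linear map `T` with values in `[𝔤,𝔤]` vanishing
      -- on `[𝔤,𝔤]` (i.e. induced by a linear map `𝔤/[𝔤,𝔤] → [𝔤,𝔤]`)
      (∃ T : L →ₗ[ℝ] L, (∀ x : L, T x ∈ derivedSub bracket) ∧
        (∀ x ∈ derivedSub bracket, T x = 0) ∧ (∀ x : L, f x = x + T x)) ∧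
      -- (ii) `f(Δ) = Δ'` and `f` is a linear isometry from `(Δ,ρ)` to `(Δ',ρ')`
      Δ.map (f : L →ₗ[ℝ] L) = Δ' ∧
      (∀ x ∈ Δ, ∀ y ∈ Δ, ρ' (f x) (f y) = ρ x y) ∧
      -- (iii) `f : (𝔤,d) → (𝔤,d')` is an isometry
      (∀ p q : L, sdist bracket (Δ' : Set L) ρ' (f p) (f q) =
        sdist bracket (Δ : Set L) ρ p q) := by
  classical
  set D := derivedSub bracket with hDdef
  set Pd : L →ₗ[ℝ] L := Δ.subtype ∘ₗ (Δ.projectionOnto D hcompl) with hPd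
  set P' : L →ₗ[ℝ] L := Δ'.subtype ∘ₗ (Δ'.projectionOnto D hcompl') with hP'
  have hPdΔ : ∀ x : L, Pd x ∈ Δ := fun x => (Δ.projectionOnto D hcompl x).2
  have hP'Δ' : ∀ x : L, P' x ∈ Δ' := fun x => (Δ'.projectionOnto D hcompl' x).2
  have hPd_sub : ∀ x : L, x - Pd x ∈ D := by
    intro x
    have h := Submodule.projection_add_projection_eq_self hcompl x
    have h2 : x - (Δ.projectionOnto D hcompl x : L)
        = (D.projectionOnto Δ hcompl.symm x : L) := (eq_sub_of_add_eq' h).symm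
    simp only [hPd, LinearMap.comp_apply, Submodule.subtype_apply]
    rw [h2]; exact (D.projectionOnto Δ hcompl.symm x).2
  have hP'_sub : ∀ x : L, x - P' x ∈ D := by
    intro x
    have h := Submodule.projection_add_projection_eq_self hcompl' x
    have h2 : x - (Δ'.projectionOnto D hcompl' x : L)
        = (D.projectionOnto Δ' hcompl'.symm x : L) := (eq_sub_of_add_eq' h).symm
    simp only [hP', LinearMap.comp_apply, Submodule.subtype_apply]
    rw [h2]; exact (D.projectionOnto Δ' hcompl'.symm x).2
  have hPd_left : ∀ x ∈ Δ, Pd x = x := by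
    intro x hx
    simp only [hPd, LinearMap.comp_apply, Submodule.subtype_apply]
    rw [Submodule.projectionOnto_apply_left hcompl ⟨x, hx⟩]
  have hPd_right : ∀ x ∈ D, Pd x = 0 := by
    intro x hx
    simp only [hPd, LinearMap.comp_apply, Submodule.subtype_apply]
    rw [Submodule.projectionOnto_apply_of_mem_right hcompl hx]; rfl
  have hP'_left : ∀ x ∈ Δ', P' x = x := by
    intro x hx
    simp only [hP', LinearMap.comp_apply, Submodule.subtype_apply]
    rw [Submodule.projectionOnto_apply_left hcompl' ⟨x, hx⟩]
  have hP'_right : ∀ x ∈ D, P' x = 0 := by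
    intro x hx
    simp only [hP', LinearMap.comp_apply, Submodule.subtype_apply]
    rw [Submodule.projectionOnto_apply_of_mem_right hcompl' hx]; rfl
  set T : L →ₗ[ℝ] L := P' ∘ₗ Pd - Pd with hT
  have hTapp : ∀ x : L, T x = P' (Pd x) - Pd x := fun x => rfl
  have hTD : ∀ x : L, T x ∈ D := by
    intro x
    rw [hTapp]
    have h := hP'_sub (Pd x)
    have h2 : P' (Pd x) - Pd x = -(Pd x - P' (Pd x)) := by abel
    rw [h2]; exact D.neg_mem h
  have hT0 : ∀ x ∈ D, T x = 0 := by
    intro x hx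
    rw [hTapp, hPd_right x hx, map_zero, sub_zero]
  have hTT : ∀ x : L, T (T x) = 0 := fun x => hT0 _ (hTD x)
  have hcomp1 : (LinearMap.id + T) ∘ₗ (LinearMap.id - T) = (LinearMap.id : L →ₗ[ℝ] L) := by
    ext x
    simp [LinearMap.comp_apply, LinearMap.add_apply, LinearMap.sub_apply, map_sub, hTT]
  have hcomp2 : (LinearMap.id - T) ∘ₗ (LinearMap.id + T) = (LinearMap.id : L →ₗ[ℝ] L) := by
    ext x
    simp [LinearMap.comp_apply, LinearMap.add_apply, LinearMap.sub_apply, map_add, hTT]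
  set f : L ≃ₗ[ℝ] L := LinearEquiv.ofLinear (LinearMap.id + T) (LinearMap.id - T)
    hcomp1 hcomp2 with hf
  have hfx : ∀ x : L, f x = x + T x := fun x => rfl
  -- automorphism
  have hauto : ∀ x y : L, f (bracket x y) = bracket (f x) (f y) := by
    intro x y
    have hbxy : bracket x y ∈ D := Submodule.subset_span ⟨x, y, rfl⟩
    have e1 : bracket (T x) y = 0 := bracket_left_zero bracket h2step (hTD x) y
    have e2 : bracket x (T y) = 0 := bracket_right_zero bracket halt h2step x (hTD y)
    have e3 : bracket (T x) (T y) = 0 := bracket_left_zero bracket h2step (hTD x) (T y)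
    rw [hfx (bracket x y), hT0 _ hbxy, add_zero, hfx x, hfx y]
    simp [map_add, LinearMap.add_apply, e1, e2, e3]
  -- f maps Δ into Δ'
  have hfΔ : ∀ x ∈ Δ, f x = P' x := by
    intro x hx
    rw [hfx, hTapp, hPd_left x hx]; abel
  have hfΔ' : ∀ x ∈ Δ, f x ∈ Δ' := by
    intro x hx; rw [hfΔ x hx]; exact hP'Δ' x
  have hmap : Δ.map (f : L →ₗ[ℝ] L) = Δ' := by
    apply le_antisymm
    · rintro _ ⟨x, hx, rfl⟩
      simpa using hfΔ' x hx
    · intro y hy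
      refine ⟨Pd y, hPdΔ y, ?_⟩
      have h1 : f (Pd y) = P' (Pd y) := hfΔ _ (hPdΔ y)
      have h2 : P' (Pd y) = y := by
        have h3 : P' (y - Pd y) = 0 := hP'_right _ (hPd_sub y)
        have h4 : P' y - P' (Pd y) = 0 := by rw [← map_sub]; exact h3
        have h5 : P' y = y := hP'_left y hy
        have h6 : P' (Pd y) = P' y := by
          have := sub_eq_zero.mp h4; exact this.symm
        rw [h6, h5]
      show f (Pd y) = y
      rw [h1, h2]
  -- diagonal values of the metric
  have hρdiag : ∀ x ∈ Δ, ρ' (f x) (f x) = ρ x x := by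
    intro x hx
    refine (hab x hx (f x) (hfΔ' x hx) ?_).symm
    have h : x - f x = -(T x) := by rw [hfx]; abel
    rw [h]; exact D.neg_mem (hTD x)
  -- polarization
  have hρ2 : ∀ x ∈ Δ, ∀ y ∈ Δ, ρ' (f x) (f y) = ρ x y := by
    intro x hx y hy
    have hxy : x + y ∈ Δ := Δ.add_mem hx hy
    have h1 := hρdiag _ hxy
    have h2 := hρdiag _ hx
    have h3 := hρdiag _ hy
    rw [map_add f x y] at h1
    have e1 : ρ (x + y) (x + y) = ρ x x + ρ x y + ρ y x + ρ y y := by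
      simp only [map_add, LinearMap.add_apply]; ring
    have e2 : ρ' (f x + f y) (f x + f y)
        = ρ' (f x) (f x) + ρ' (f x) (f y) + ρ' (f y) (f x) + ρ' (f y) (f y) := by
      simp only [map_add, LinearMap.add_apply]; ring
    have hs := hsym x hx y hy
    have hs' := hsym' (f x) (hfΔ' x hx) (f y) (hfΔ' y hy)
    rw [e1, e2] at h1
    linarith
  refine ⟨f, hauto, ?_, ⟨T, hTD, hT0, hfx⟩, hmap, hρ2, ?_⟩
  · intro x
    have h : f x - x = T x := by rw [hfx]; abel
    rw [h]; exact hTD x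
  · -- (iii)
    have hS1 : ∀ x ∈ (Δ : Set L), f x ∈ (Δ' : Set L) := fun x hx => hfΔ' x hx
    have hS2 : ∀ x ∈ (Δ' : Set L), f.symm x ∈ (Δ : Set L) := by
      intro x hx
      have hx' : x ∈ Δ.map (f : L →ₗ[ℝ] L) := hmap ▸ hx
      obtain ⟨a, ha, hfa⟩ := hx'
      have h : f.symm x = a := by
        apply f.injective
        rw [f.apply_symm_apply]
        exact hfa.symm
      rw [h]; exact ha
    have hauto' : ∀ x y : L, f.symm (bracket x y) = bracket (f.symm x) (f.symm y) := by
      intro x y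
      apply f.injective
      rw [f.apply_symm_apply, hauto, f.apply_symm_apply, f.apply_symm_apply]
    have hρ'2 : ∀ x ∈ (Δ' : Set L), ρ (f.symm x) (f.symm x) = ρ' x x := by
      intro x hx
      have h := hρdiag (f.symm x) (hS2 x hx)
      rw [f.apply_symm_apply] at h
      exact h.symm
    have hEN : ∀ z : L, energyN bracket (Δ' : Set L) ρ' (f z)
        = energyN bracket (Δ : Set L) ρ z := by
      intro z
      have hsub1 := energySet_subset bracket f hauto (Δ : Set L) (Δ' : Set L) hS1 ρ ρ'
        (fun x hx => hρdiag x hx) z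
      have hsub2 := energySet_subset bracket f.symm hauto' (Δ' : Set L) (Δ : Set L) hS2 ρ' ρ
        hρ'2 (f z)
      rw [f.symm_apply_apply] at hsub2
      unfold energyN
      exact congrArg sInf (le_antisymm hsub2 hsub1)
    intro p q
    have hgm : gmul bracket (-(f p)) (f q) = f (gmul bracket (-p) q) := by
      unfold gmul
      simp only [map_add, _root_.map_smul, hauto, map_neg, LinearMap.neg_apply]
    unfold sdist
    rw [hgm, hEN]
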